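/- Strong linearity of integration: in a field of well-based series T with a surjective H-field derivation, the antiderivative operator ∫ : T → T sending f to the unique F with F' = f and 1 ∉ supp F is strongly linear. -/

import Mathlib

open HahnSeries Classical

variable {Γ R : Type*}

/-- The natural ordering of a Hahn series field: `s < t` iff the leading
coefficient of `t - s` is positive (Mathlib's convention: support well-ordered
from below). -/
def HahnLt [AddCommGroup Γ] [LinearOrder Γ] [IsOrderedAddMonoid Γ] [Field R] [LinearOrder R] [IsStrictOrderedRing R]
    (s t : HahnSeries Γ R) : Prop := 0 < (t - s).leadingCoeff

/-- A strongly linear map: an `R`-linear map preserving summable families and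
their sums. -/
def StronglyLinearMap [AddCommGroup Γ] [LinearOrder Γ] [IsOrderedAddMonoid Γ] [Field R] [LinearOrder R] [IsStrictOrderedRing R]
    (Φ : HahnSeries Γ R → HahnSeries Γ R) : Prop :=
  (∀ f g : HahnSeries Γ R, Φ (f + g) = Φ f + Φ g) ∧
  (∀ (r : R) (f : HahnSeries Γ R), Φ (r • f) = r • Φ f) ∧
  ∀ (ι : Type) (s : HahnSeries.SummableFamily Γ R ι),
    ∃ t : HahnSeries.SummableFamily Γ R ι,
      (∀ i, t i = Φ (s i)) ∧ t.hsum = Φ s.hsum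

namespace IntAux

variable [AddCommGroup Γ] [LinearOrder Γ] [IsOrderedAddMonoid Γ] [Field R] [LinearOrder R] [IsStrictOrderedRing R]

theorem coeff_order_ne_zero {f : HahnSeries Γ R} (hf : f ≠ 0) : f.coeff f.order ≠ 0 :=
  coeff_order_eq_zero.not.2 hf

theorem order_eq_of_coeff {f : HahnSeries Γ R} {x : Γ} (h1 : f.coeff x ≠ 0)
    (h2 : ∀ γ, γ < x → f.coeff γ = 0) : f.order = x := by
  have hf : f ≠ 0 := ne_zero_of_coeff_ne_zero h1
  have hle : f.order ≤ x := order_le_of_coeff_ne_zero h1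
  rcases lt_or_eq_of_le hle with h | h
  · exact absurd (h2 _ h) (coeff_order_ne_zero hf)
  · exact h

/-- If `g` vanishes at and below the order of `f`, then `f + g` has the same
order and leading coefficient as `f`. -/
theorem add_left {f g : HahnSeries Γ R} (hf : f ≠ 0)
    (hg : ∀ γ, γ ≤ f.order → g.coeff γ = 0) :
    f + g ≠ 0 ∧ (f + g).order = f.order ∧ (f + g).leadingCoeff = f.leadingCoeff := by
  have hco : (f + g).coeff f.order = f.coeff f.order := by
    rw [coeff_add, hg _ le_rfl, add_zero]
  have h1 : (f + g).coeff f.order ≠ 0 := by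
    rw [hco]; exact coeff_order_ne_zero hf
  have h2 : ∀ γ, γ < f.order → (f + g).coeff γ = 0 := by
    intro γ hγ
    rw [coeff_add, coeff_eq_zero_of_lt_order hγ, hg _ hγ.le, add_zero]
  have ho := order_eq_of_coeff h1 h2
  refine ⟨ne_zero_of_coeff_ne_zero h1, ho, ?_⟩
  rw [leadingCoeff_eq, leadingCoeff_eq, ho, hco]

theorem min_order_le {f g : HahnSeries Γ R} (hfg : f + g ≠ 0) :
    min f.order g.order ≤ (f + g).order := by
  by_contra h
  push_neg at h
  have : (f + g).coeff (f + g).order = 0 := by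
    rw [coeff_add, coeff_eq_zero_of_lt_order (lt_of_lt_of_le h (min_le_left _ _)),
      coeff_eq_zero_of_lt_order (lt_of_lt_of_le h (min_le_right _ _)), add_zero]
  exact coeff_order_ne_zero hfg this

theorem smul_ne_zero' {r : R} {f : HahnSeries Γ R} (hr : r ≠ 0) (hf : f ≠ 0) :
    r • f ≠ 0 := by
  intro h
  apply hf
  ext γ
  have := congrArg (fun x : HahnSeries Γ R => x.coeff γ) h
  simp only [HahnSeries.coeff_smul, HahnSeries.coeff_zero, smul_eq_mul] at this
  simpa [hr] using this

theorem order_smul' {r : R} {f : HahnSeries Γ R} (hr : r ≠ 0) (hf : f ≠ 0) :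
    (r • f).order = f.order ∧ (r • f).leadingCoeff = r * f.leadingCoeff := by
  have h1 : (r • f).coeff f.order ≠ 0 := by
    rw [HahnSeries.coeff_smul, smul_eq_mul]
    exact mul_ne_zero hr (by rw [← leadingCoeff_eq]; exact leadingCoeff_ne_zero.mpr hf)
  have h2 : ∀ γ, γ < f.order → (r • f).coeff γ = 0 := by
    intro γ hγ
    rw [HahnSeries.coeff_smul, coeff_eq_zero_of_lt_order hγ, smul_zero]
  have ho := order_eq_of_coeff h1 h2
  refine ⟨ho, ?_⟩
  rw [leadingCoeff_eq, ho, HahnSeries.coeff_smul, smul_eq_mul, leadingCoeff_eq]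

theorem lc_neg {f : HahnSeries Γ R} : (-f).leadingCoeff = -f.leadingCoeff := by
  rw [leadingCoeff_eq, leadingCoeff_eq, order_neg, coeff_neg]

theorem lc_mul {f g : HahnSeries Γ R} (hf : f ≠ 0) (hg : g ≠ 0) :
    (f * g).leadingCoeff = f.leadingCoeff * g.leadingCoeff := by
  rw [leadingCoeff_eq, order_mul hf hg, coeff_mul_order_add_order]

theorem mul_ne_zero'' {f g : HahnSeries Γ R} (hf : f ≠ 0) (hg : g ≠ 0) : f * g ≠ 0 := by
  rw [← leadingCoeff_ne_zero, lc_mul hf hg]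
  exact mul_ne_zero (leadingCoeff_ne_zero.mpr hf) (leadingCoeff_ne_zero.mpr hg)

theorem order_inv {f : HahnSeries Γ R} (hf : f ≠ 0) :
    (f⁻¹).order = -f.order ∧ (f⁻¹).leadingCoeff = (f.leadingCoeff)⁻¹ := by
  have hinv : f⁻¹ ≠ 0 := inv_ne_zero hf
  have h1 : f * f⁻¹ = 1 := mul_inv_cancel₀ hf
  have ho : f.order + (f⁻¹).order = 0 := by
    rw [← order_mul hf hinv, h1, order_one]
  have hlc : f.leadingCoeff * (f⁻¹).leadingCoeff = 1 := by
    rw [← lc_mul hf hinv, h1, leadingCoeff_one]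
  refine ⟨by rw [eq_neg_iff_add_eq_zero, add_comm]; exact ho, ?_⟩
  exact eq_inv_of_mul_eq_one_right hlc

theorem hahnLt_zero_iff {f : HahnSeries Γ R} : HahnLt 0 f ↔ 0 < f.leadingCoeff := by
  unfold HahnLt; rw [sub_zero]

theorem C_coeff_ne {r : R} {γ : Γ} (hγ : γ ≠ 0) : (HahnSeries.C r : HahnSeries Γ R).coeff γ = 0 := by
  rw [HahnSeries.C_apply, coeff_single_of_ne hγ]

/-- A series of negative order and positive leading coefficient is greater than
every constant. -/
theorem infinite_pos {f : HahnSeries Γ R} (hf : f ≠ 0) (ho : f.order < 0)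
    (hlc : 0 < f.leadingCoeff) : ∀ r : R, HahnLt (HahnSeries.C r) f := by
  intro r
  unfold HahnLt
  have : f - HahnSeries.C r = f + (-(HahnSeries.C r)) := by ring
  rw [this]
  have h := add_left hf (g := -(HahnSeries.C r)) (fun γ hγ => by
    rw [coeff_neg, C_coeff_ne (by rintro rfl; exact absurd (lt_of_le_of_lt hγ ho) (lt_irrefl _)), neg_zero])
  rw [h.2.2]; exact hlc

/-- The `r`-trick: if `u + r • w` has positive leading coefficient for every
constant `r`, then `w` is strictly smaller than `u`. -/
theorem small_of_forall_pos {u w : HahnSeries Γ R}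
    (h : ∀ r : R, 0 < (u + r • w).leadingCoeff) : w = 0 ∨ u.order < w.order := by
  by_cases hw : w = 0
  · exact Or.inl hw
  right
  by_contra hlt
  push_neg at hlt
  have hlcw : w.leadingCoeff ≠ 0 := leadingCoeff_ne_zero.mpr hw
  set c : R := u.coeff w.order with hc
  set r : R := (-1 - c) / w.leadingCoeff with hr
  have h1 : (u + r • w).coeff w.order = -1 := by
    rw [coeff_add, HahnSeries.coeff_smul, smul_eq_mul, ← leadingCoeff_eq, hr]
    field_simp
    rw [hc]; ring
  have h2 : ∀ γ, γ < w.order → (u + r • w).coeff γ = 0 := by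
    intro γ hγ
    rw [coeff_add, HahnSeries.coeff_smul, coeff_eq_zero_of_lt_order hγ, smul_zero,
      coeff_eq_zero_of_lt_order (lt_of_lt_of_le hγ hlt), add_zero]
  have hne : (u + r • w) ≠ 0 := ne_zero_of_coeff_ne_zero (by rw [h1]; norm_num)
  have ho := order_eq_of_coeff (by rw [h1]; norm_num) h2
  have := h r
  rw [leadingCoeff_eq, ho, h1] at this
  norm_num at this

section Deriv

variable (d : HahnSeries Γ R → HahnSeries Γ R)
variable (hd_add : ∀ f g : HahnSeries Γ R, d (f + g) = d f + d g)
variable (hd_ker : ∀ f : HahnSeries Γ R, d f = 0 ↔ ∃ r : R, f = HahnSeries.C r)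

include hd_add in
theorem d_zero : d 0 = 0 := by
  have := hd_add 0 0
  rw [add_zero] at this
  exact left_eq_add.mp this

include hd_add in
theorem d_neg (f : HahnSeries Γ R) : d (-f) = -(d f) := by
  have := hd_add f (-f)
  rw [add_neg_cancel, d_zero d hd_add] at this
  linear_combination -this

include hd_add in
theorem d_sub (f g : HahnSeries Γ R) : d (f - g) = d f - d g := by
  rw [sub_eq_add_neg, hd_add, d_neg d hd_add, sub_eq_add_neg]

include hd_ker in
theorem d_ne_zero {g : HahnSeries Γ R} (hg : g ≠ 0) (h0 : g.coeff 0 = 0) : d g ≠ 0 := by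
  intro h
  obtain ⟨r, hr⟩ := (hd_ker g).mp h
  have : r = 0 := by
    have := congrArg (fun x : HahnSeries Γ R => x.coeff 0) hr
    simp only [HahnSeries.C_apply, coeff_single_same] at this
    rw [h0] at this; exact this.symm
  rw [this] at hr
  apply hg
  rw [hr, map_zero]

end Deriv

section Deriv2

variable (d : HahnSeries Γ R → HahnSeries Γ R)
variable (hd_add : ∀ f g : HahnSeries Γ R, d (f + g) = d f + d g)
variable (hd_smul : ∀ (r : R) (f : HahnSeries Γ R), d (r • f) = r • d f)
variable (hd_leib : ∀ f g : HahnSeries Γ R, d (f * g) = d f * g + f * d g)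
variable (hd_ker : ∀ f : HahnSeries Γ R, d f = 0 ↔ ∃ r : R, f = HahnSeries.C r)
variable (hH : ∀ f : HahnSeries Γ R,
      (∀ r : R, HahnLt (HahnSeries.C r) f) → HahnLt 0 (d f))

include hH in
theorem d_pos {g : HahnSeries Γ R} (hg : g ≠ 0) (ho : g.order < 0)
    (hlc : 0 < g.leadingCoeff) : 0 < (d g).leadingCoeff :=
  hahnLt_zero_iff.mp (hH g (infinite_pos hg ho hlc))

include hd_add hd_smul hd_leib hH in
/-- In an H-field, the derivative of a small element is smaller than the
logarithmic derivative of an infinite element. -/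
theorem SL {a b : HahnSeries Γ R} (ha : a ≠ 0) (hb : b ≠ 0)
    (hao : 0 < a.order) (hbo : b.order < 0) (hblc : 0 < b.leadingCoeff)
    (hda : d a ≠ 0) (hdb : d b ≠ 0) :
    (d b).order - b.order < (d a).order := by
  have hba : b * a ≠ 0 := mul_ne_zero'' hb ha
  have key : ∀ r : R, 0 < (d b + r • (d b * a + b * d a)).leadingCoeff := by
    intro r
    have hcond : ∀ γ, γ ≤ b.order → (r • (b * a)).coeff γ = 0 := by
      intro γ hγ
      rw [HahnSeries.coeff_smul, coeff_eq_zero_of_lt_order, smul_zero]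
      rw [order_mul hb ha]
      exact lt_of_le_of_lt hγ (lt_add_of_pos_right _ hao)
    obtain ⟨hne, ho, hlc⟩ := add_left hb hcond
    have hpos : 0 < (d (b + r • (b * a))).leadingCoeff :=
      d_pos d hH hne (by rw [ho]; exact hbo) (by rw [hlc]; exact hblc)
    have e1 : d (b + r • (b * a)) = d b + r • (d b * a + b * d a) := by
      rw [hd_add, hd_smul, hd_leib]
    rwa [e1] at hpos
  rw [sub_lt_iff_lt_add]
  by_cases hwz : d b * a + b * d a = 0
  · -- b * d a = -(d b * a)
    have hbda : b * d a = -(d b * a) := by linear_combination hwz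
    have hdba : d b * a ≠ 0 := mul_ne_zero'' hdb ha
    have ho : b.order + (d a).order = (d b).order + a.order := by
      have h1 := congrArg HahnSeries.order hbda
      rwa [order_mul hb hda, order_neg, order_mul hdb ha] at h1
    calc (d b).order < (d b).order + a.order := lt_add_of_pos_right _ hao
      _ = b.order + (d a).order := ho.symm
      _ = (d a).order + b.order := add_comm _ _
  · have h := (small_of_forall_pos key).resolve_left hwz
    set w := d b * a + b * d a with hw
    have hdba : d b * a ≠ 0 := mul_ne_zero'' hdb ha
    have hbda : b * d a ≠ 0 := mul_ne_zero'' hb hda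
    have hsplit : b * d a = w + (-(d b * a)) := by rw [hw]; ring
    have hmin := min_order_le (f := w) (g := -(d b * a)) (by rw [← hsplit]; exact hbda)
    rw [← hsplit, order_mul hb hda] at hmin
    have h2 : (d b).order < (-(d b * a)).order := by
      rw [order_neg, order_mul hdb ha]
      exact lt_add_of_pos_right _ hao
    have h3 : (d b).order < b.order + (d a).order := lt_of_lt_of_le (lt_min h h2) hmin
    calc (d b).order < b.order + (d a).order := h3
      _ = (d a).order + b.order := add_comm _ _

include hd_add hd_smul hd_leib hd_ker hH in
/-- l'Hopital / valuation-compatibility: the derivative is strictly monotone on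
orders (for purely noninteger-supported nonzero series), positive leading
coefficient case. -/
theorem Lcore {g g' : HahnSeries Γ R} (hg : g ≠ 0) (hg' : g' ≠ 0)
    (h0 : g.coeff 0 = 0) (h0' : g'.coeff 0 = 0)
    (hlcg : 0 < g.leadingCoeff) (hlcg' : 0 < g'.leadingCoeff)
    (hlt : g.order < g'.order) : (d g).order < (d g').order := by
  have hog : g.order ≠ 0 := fun h => coeff_order_ne_zero hg (by rw [h]; exact h0)
  have hog' : g'.order ≠ 0 := fun h => coeff_order_ne_zero hg' (by rw [h]; exact h0')
  have hdg : d g ≠ 0 := d_ne_zero d hd_ker hg h0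
  have hdg' : d g' ≠ 0 := d_ne_zero d hd_ker hg' h0'
  rcases lt_trichotomy g'.order 0 with hI | hI | hI
  · -- Case I : both infinite
    set h := g * g'⁻¹ with hh
    have hinv : g'⁻¹ ≠ 0 := inv_ne_zero hg'
    have hhne : h ≠ 0 := mul_ne_zero'' hg hinv
    obtain ⟨hoi, hlci⟩ := order_inv hg'
    have hoh : h.order = g.order - g'.order := by
      rw [hh, order_mul hg hinv, hoi, sub_eq_add_neg]
    have hlch : 0 < h.leadingCoeff := by
      rw [hh, lc_mul hg hinv, hlci]
      exact mul_pos hlcg (inv_pos.mpr hlcg')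
    have hdh : 0 < (d h).leadingCoeff :=
      d_pos d hH hhne (by rw [hoh]; exact sub_neg.mpr hlt) hlch
    have hgg : g = h * g' := by
      rw [hh, mul_assoc, inv_mul_cancel₀ hg', mul_one]
    have hthis : d g = d h * g' + h * d g' := by
      have := hd_leib h g'
      rwa [← hgg] at this
    have hN : d g * g' - g * d g' = d h * (g' * g') := by
      calc d g * g' - g * d g'
          = (d h * g' + h * d g') * g' - (h * g') * d g' := by rw [← hthis, ← hgg]
        _ = d h * (g' * g') := by ring
    have hdhne : d h ≠ 0 := leadingCoeff_ne_zero.mp (ne_of_gt hdh)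
    have hNpos : 0 < (d g * g' - g * d g').leadingCoeff := by
      rw [hN, lc_mul hdhne (mul_ne_zero'' hg' hg'), lc_mul hg' hg']
      exact mul_pos hdh (mul_pos hlcg' hlcg')
    by_contra hcon
    push_neg at hcon
    have hBne : g * d g' ≠ 0 := mul_ne_zero'' hg hdg'
    have hord : (-(g * d g')).order < (d g * g').order := by
      rw [order_neg, order_mul hg hdg', order_mul hdg hg']
      calc g.order + (d g').order < g'.order + (d g').order := add_lt_add_left hlt _
        _ ≤ g'.order + (d g).order := add_le_add le_rfl hcon
        _ = (d g).order + g'.order := add_comm _ _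
    have hsplit : d g * g' - g * d g' = (-(g * d g')) + (d g * g') := by ring
    have hres := add_left (f := -(g * d g')) (g := d g * g') (neg_ne_zero.mpr hBne)
      (fun γ hγ => coeff_eq_zero_of_lt_order (lt_of_le_of_lt hγ hord))
    have hdg'pos : 0 < (d g').leadingCoeff := d_pos d hH hg' hI hlcg'
    have hneg : (d g * g' - g * d g').leadingCoeff < 0 := by
      rw [hsplit, hres.2.2, lc_neg, lc_mul hg hdg']
      have := mul_pos hlcg hdg'pos
      linarith
    linarith
  · exact absurd hI hog'
  · rcases lt_trichotomy g.order 0 with hg0 | hg0 | hg0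
    · -- Case III
      have hSL := SL d hd_add hd_smul hd_leib hH (a := g') (b := g)
        hg' hg hI hg0 hlcg hdg' hdg
      have h1 : (d g).order < (d g).order - g.order := by
        rw [sub_eq_add_neg]
        exact lt_add_of_pos_right _ (neg_pos.mpr hg0)
      exact lt_trans h1 hSL
    · exact absurd hg0 hog
    · -- Case II : both infinitesimal
      set c := g' * g⁻¹ with hc
      set b := g⁻¹ with hbdef
      have hbne : b ≠ 0 := inv_ne_zero hg
      obtain ⟨hob, hlcb⟩ := order_inv hg
      have hcne : c ≠ 0 := mul_ne_zero'' hg' hbne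
      have hoc : c.order = g'.order - g.order := by
        rw [hc, order_mul hg' hbne, hob, sub_eq_add_neg]
      have hocpos : 0 < c.order := by rw [hoc]; exact sub_pos.mpr hlt
      have hobneg : b.order < 0 := by rw [hob]; exact neg_neg_iff_pos.mpr hg0
      have hlcbpos : 0 < b.leadingCoeff := by rw [hlcb]; exact inv_pos.mpr hlcg
      have hdb : d b ≠ 0 := by
        intro hzero
        obtain ⟨r, hr⟩ := (hd_ker b).mp hzero
        by_cases hr0 : r = 0
        · rw [hr0, map_zero] at hr; exact hbne hr
        · have h1 := congrArg HahnSeries.order hr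
          rw [hob, HahnSeries.C_apply, order_single hr0] at h1
          exact absurd (neg_eq_zero.mp h1) (ne_of_gt hg0)
      have hgc : g' = c * g := by
        rw [hc, mul_assoc, inv_mul_cancel₀ hg, mul_one]
      have hdc : d c ≠ 0 := by
        intro hzero
        obtain ⟨r, hr⟩ := (hd_ker c).mp hzero
        by_cases hr0 : r = 0
        · rw [hr0, map_zero] at hr; exact hcne hr
        · have hCne : (HahnSeries.C r : HahnSeries Γ R) ≠ 0 := by
            rw [HahnSeries.C_apply]; exact single_ne_zero hr0
          have h1 : g'.order = g.order := by
            rw [hgc, hr, order_mul hCne hg, HahnSeries.C_apply, order_single hr0, zero_add]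
          rw [h1] at hlt; exact lt_irrefl _ hlt
      have hSL := SL d hd_add hd_smul hd_leib hH (a := c) (b := b)
        hcne hbne hocpos hobneg hlcbpos hdc hdb
      -- g * d b = -(d g * b)
      have e1 : g * d b = -(d g * b) := by
        have h1 : g * b = 1 := mul_inv_cancel₀ hg
        have h2 := hd_leib g b
        rw [h1] at h2
        have hd1 : d (1 : HahnSeries Γ R) = 0 :=
          (hd_ker 1).mpr ⟨1, by rw [map_one]⟩
        rw [hd1] at h2
        linear_combination -h2
      have e2 : g.order + (d b).order = (d g).order + b.order := by
        have h1 := congrArg HahnSeries.order e1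
        rwa [order_mul hg hdb, order_neg, order_mul hdg hbne] at h1
      have e3 : (d g).order - g.order < (d c).order := by
        have heq : (d b).order - b.order = (d g).order - g.order := by
          rw [sub_eq_sub_iff_add_eq_add]
          calc (d b).order + g.order = g.order + (d b).order := add_comm _ _
            _ = (d g).order + b.order := e2
        rwa [heq] at hSL
      have e4 : d g' = d c * g + c * d g := by rw [hgc, hd_leib]
      rw [sub_lt_iff_lt_add] at e3
      have o1 : (d g).order < (d c * g).order := by
        rw [order_mul hdc hg]; exact e3
      have o2 : (d g).order < (c * d g).order := by
        rw [order_mul hcne hdg]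
        exact lt_add_of_pos_left _ hocpos
      have hmin := min_order_le (f := d c * g) (g := c * d g) (by rw [← e4]; exact hdg')
      rw [← e4] at hmin
      exact lt_of_lt_of_le (lt_min o1 o2) hmin

include hd_add hd_smul hd_leib hd_ker hH in
theorem Lmain {g g' : HahnSeries Γ R} (hg : g ≠ 0) (hg' : g' ≠ 0)
    (h0 : g.coeff 0 = 0) (h0' : g'.coeff 0 = 0)
    (hlt : g.order < g'.order) : (d g).order < (d g').order := by
  have hkey : ∀ f : HahnSeries Γ R, f ≠ 0 → f.coeff 0 = 0 →
      ∃ f' : HahnSeries Γ R, f' ≠ 0 ∧ f'.coeff 0 = 0 ∧ 0 < f'.leadingCoeff ∧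
        f'.order = f.order ∧ (d f').order = (d f).order := by
    intro f hf hf0
    rcases lt_or_gt_of_ne (leadingCoeff_ne_zero.mpr hf) with hneg | hpos
    · refine ⟨-f, neg_ne_zero.mpr hf, by rw [coeff_neg, hf0, neg_zero], ?_, order_neg, ?_⟩
      · rw [lc_neg]; linarith
      · rw [d_neg d hd_add, order_neg]
    · exact ⟨f, hf, hf0, hpos, rfl, rfl⟩
  obtain ⟨a, ha, ha0, halc, hao, hado⟩ := hkey g hg h0
  obtain ⟨b, hb, hb0, hblc, hbo, hbdo⟩ := hkey g' hg' h0'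
  rw [← hado, ← hbdo]
  exact Lcore d hd_add hd_smul hd_leib hd_ker hH ha hb ha0 hb0 halc hblc
    (by rw [hao, hbo]; exact hlt)

/-- The shift on monomial orders induced by the derivation. -/
noncomputable def psi (δ : Γ) : Γ := (d (single δ (1 : R))).order

include hd_ker in
theorem d_single_ne {δ : Γ} (hδ : δ ≠ 0) : d (single δ (1 : R)) ≠ 0 :=
  d_ne_zero d hd_ker (single_ne_zero one_ne_zero) (coeff_single_of_ne (Ne.symm hδ))

include hd_add hd_smul hd_leib hd_ker hH in
theorem psi_mono {δ δ' : Γ} (hδ : δ ≠ 0) (hδ' : δ' ≠ 0) (h : δ < δ') :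
    psi d δ < psi d δ' := by
  unfold psi
  exact Lmain d hd_add hd_smul hd_leib hd_ker hH
    (single_ne_zero one_ne_zero) (single_ne_zero one_ne_zero)
    (coeff_single_of_ne (Ne.symm hδ)) (coeff_single_of_ne (Ne.symm hδ'))
    (by rw [order_single one_ne_zero, order_single one_ne_zero]; exact h)

include hd_add hd_smul hd_leib hd_ker hH in
/-- Order formula: the order of `d g` is `ψ` of the order of `g`. -/
theorem orderD {g : HahnSeries Γ R} (hg : g ≠ 0) (h0 : g.coeff 0 = 0) :
    (d g).order = psi d (R := R) g.order := by
  have hδ : g.order ≠ 0 := fun h => coeff_order_ne_zero hg (by rw [h]; exact h0)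
  set δ := g.order with hdel
  set c := g.leadingCoeff with hc
  have hcne : c ≠ 0 := leadingCoeff_ne_zero.mpr hg
  have hm : (single δ c : HahnSeries Γ R) = c • single δ (1 : R) := by
    ext γ
    rw [HahnSeries.coeff_smul, smul_eq_mul]
    by_cases hγ : γ = δ
    · subst hγ; rw [coeff_single_same, coeff_single_same, mul_one]
    · rw [coeff_single_of_ne hγ, coeff_single_of_ne hγ, mul_zero]
  have hsne : d (single δ (1 : R)) ≠ 0 := d_single_ne d hd_ker hδ
  have hdm : d (single δ c) = c • d (single δ (1 : R)) := by rw [hm, hd_smul]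
  have hdmo : (d (single δ c)).order = psi d (R := R) δ := by
    rw [hdm]; exact (order_smul' hcne hsne).1
  have hdmne : d (single δ c) ≠ 0 := by
    rw [hdm]; exact smul_ne_zero' hcne hsne
  by_cases hrest : g - single δ c = 0
  · rw [sub_eq_zero] at hrest
    rw [hrest, hdmo]
  · set g1 := g - single δ c with hg1
    have hg1supp : ∀ γ, γ ≤ δ → g1.coeff γ = 0 := by
      intro γ hγ
      rw [hg1, coeff_sub]
      rcases lt_or_eq_of_le hγ with h | h
      · rw [coeff_eq_zero_of_lt_order h, coeff_single_of_ne (ne_of_lt h), sub_zero]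
      · rw [h, coeff_single_same, hc, leadingCoeff_eq, ← hdel, sub_self]
    have ho1 : δ < g1.order := by
      by_contra hle
      push_neg at hle
      exact coeff_order_ne_zero hrest (hg1supp _ hle)
    have h01 : g1.coeff 0 = 0 := by
      rw [hg1, coeff_sub, h0, coeff_single_of_ne (Ne.symm hδ), sub_self]
    have hL : (d (single δ c)).order < (d g1).order := by
      apply Lmain d hd_add hd_smul hd_leib hd_ker hH
        (single_ne_zero hcne) hrest (coeff_single_of_ne (Ne.symm hδ)) h01
      rw [order_single hcne]
      exact ho1
    have hgdecomp : g = single δ c + g1 := by rw [hg1]; ring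
    have hres := add_left (f := d (single δ c)) (g := d g1) hdmne
      (fun γ hγ => coeff_eq_zero_of_lt_order (lt_of_le_of_lt hγ hL))
    have hdg : d g = d (single δ c) + d g1 := by rw [hgdecomp, hd_add]
    rw [hdg, hres.2.1, hdmo]

end Deriv2

section Trunc

/-- Truncation of a Hahn series to a set of exponents. -/
noncomputable def trunc (S : Set Γ) (f : HahnSeries Γ R) : HahnSeries Γ R where
  coeff := fun γ => if γ ∈ S then f.coeff γ else 0
  isPWO_support' := f.isPWO_support.mono (fun γ hγ => by
    simp only [Function.mem_support] at hγ ⊢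
    by_cases h : γ ∈ S
    · rwa [if_pos h] at hγ
    · rw [if_neg h] at hγ; exact absurd rfl hγ)

theorem trunc_coeff {S : Set Γ} {f : HahnSeries Γ R} {γ : Γ} :
    (trunc S f).coeff γ = if γ ∈ S then f.coeff γ else 0 := rfl

theorem trunc_coeff_mem {S : Set Γ} {f : HahnSeries Γ R} {γ : Γ} (h : γ ∈ S) :
    (trunc S f).coeff γ = f.coeff γ := if_pos h

theorem trunc_coeff_not {S : Set Γ} {f : HahnSeries Γ R} {γ : Γ} (h : γ ∉ S) :
    (trunc S f).coeff γ = 0 := if_neg h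

theorem support_trunc {S : Set Γ} {f : HahnSeries Γ R} :
    (trunc S f).support = f.support ∩ S := by
  ext γ
  simp only [HahnSeries.mem_support, Set.mem_inter_iff, trunc_coeff]
  by_cases h : γ ∈ S <;> simp [h]

theorem sub_trunc {S : Set Γ} {f : HahnSeries Γ R} :
    f - trunc S f = trunc Sᶜ f := by
  ext γ
  rw [coeff_sub, trunc_coeff, trunc_coeff]
  by_cases h : γ ∈ S <;> simp [h]

end Trunc

section MainKey

/-- The union of the supports of a family. -/
def Vset (F : ℕ → HahnSeries Γ R) : Set Γ := ⋃ k, (F k).support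

/-- `γ` is a good point for the family `F` if the part of the union of supports
up to `γ` is well-ordered and all co-supports up to `γ` are finite. -/
def goodPt (F : ℕ → HahnSeries Γ R) (γ : Γ) : Prop :=
  {x ∈ Vset F | x ≤ γ}.IsWF ∧ ∀ γ' ≤ γ, {k | (F k).coeff γ' ≠ 0}.Finite

theorem descend_bad (F : ℕ → HahnSeries Γ R) {x : ℕ → Γ} (hanti : StrictAnti x)
    (hmem : ∀ n, x n ∈ Vset F) : ¬ goodPt F (x 0) := by
  intro hgood
  apply Set.isWF_iff_no_descending_seq.mp hgood.1 (fun n => x (n + 1))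
    (fun a b hab => hanti (by omega))
  intro n
  exact ⟨hmem _, le_of_lt (hanti (Nat.succ_pos n))⟩

theorem propagate (F : ℕ → HahnSeries Γ R) {γ : Γ} (hbad : ¬ goodPt F γ) :
    ∃ x, x ∈ Vset F ∧ ¬ goodPt F x ∧ x ≤ γ := by
  rw [goodPt, not_and_or] at hbad
  rcases hbad with h1 | h2
  · rw [Set.isWF_iff_no_descending_seq] at h1
    push_neg at h1
    obtain ⟨x, hanti, hmem⟩ := h1
    refine ⟨x 1, (hmem 1).1, ?_, (hmem 1).2⟩
    exact descend_bad F (x := fun n => x (n + 1)) (fun a b hab => hanti (by omega))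
      (fun n => (hmem (n + 1)).1)
  · push_neg at h2
    obtain ⟨γ', hle, hinf⟩ := h2
    obtain ⟨k, hk⟩ := Set.Infinite.nonempty hinf
    refine ⟨γ', Set.mem_iUnion.mpr ⟨k, hk⟩, ?_, hle⟩
    rw [goodPt, not_and_or]
    right
    push_neg
    exact ⟨γ', le_rfl, hinf⟩

theorem truncFam_summable (F : ℕ → HahnSeries Γ R) (Gs : Set Γ)
    (hGs : ∀ γ ∈ Gs, goodPt F γ) :
    (⋃ k, (trunc Gs (F k)).support).IsPWO ∧
      ∀ γ : Γ, {k | (trunc Gs (F k)).coeff γ ≠ 0}.Finite := by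
  constructor
  · rw [Set.isPWO_iff_isWF, Set.isWF_iff_no_descending_seq]
    intro x hanti hmem
    have hx : ∀ n, x n ∈ Vset F ∧ x n ∈ Gs := by
      intro n
      obtain ⟨k, hk⟩ := Set.mem_iUnion.mp (hmem n)
      rw [support_trunc] at hk
      exact ⟨Set.mem_iUnion.mpr ⟨k, hk.1⟩, hk.2⟩
    exact descend_bad F hanti (fun n => (hx n).1) (hGs _ (hx 0).2)
  · intro γ
    by_cases hγ : γ ∈ Gs
    · apply ((hGs γ hγ).2 γ le_rfl).subset
      intro k hk
      simp only [Set.mem_setOf_eq] at hk ⊢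
      rwa [trunc_coeff_mem hγ] at hk
    · convert Set.finite_empty
      ext k
      simp [trunc_coeff_not hγ]

end MainKey

section MainKey2

variable (d : HahnSeries Γ R → HahnSeries Γ R)
variable (hd_add : ∀ f g : HahnSeries Γ R, d (f + g) = d f + d g)
variable (hd_smul : ∀ (r : R) (f : HahnSeries Γ R), d (r • f) = r • d f)
variable (hd_leib : ∀ f g : HahnSeries Γ R, d (f * g) = d f * g + f * d g)
variable (hd_ker : ∀ f : HahnSeries Γ R, d f = 0 ↔ ∃ r : R, f = HahnSeries.C r)
variable (hH : ∀ f : HahnSeries Γ R,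
      (∀ r : R, HahnLt (HahnSeries.C r) f) → HahnLt 0 (d f))
variable (hd_sum : ∀ s : SummableFamily Γ R ℕ,
      ∃ t : SummableFamily Γ R ℕ, ∀ i, t i = d (s i))

include hd_add hd_smul hd_leib hd_ker hH hd_sum in
/-- Main key lemma: if the derivatives of a family of constant-free series form
a summable family, then every point is good for the family. -/
theorem main_key (F : ℕ → HahnSeries Γ R) (sf : SummableFamily Γ R ℕ)
    (hdF : ∀ k, d (F k) = sf k) (h0F : ∀ k, (F k).coeff 0 = 0) :
    ∀ γ : Γ, goodPt F γ := by
  by_contra hbad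
  push_neg at hbad
  obtain ⟨γbar, hγbar⟩ := hbad
  classical
  set VB : Set Γ := {x | x ∈ Vset F ∧ ¬ goodPt F x} with hVB
  have hVBne : VB.Nonempty := by
    obtain ⟨x, h1, h2, _⟩ := propagate F hγbar
    exact ⟨x, h1, h2⟩
  set Gs : Set Γ := {γ | goodPt F γ} with hGsdef
  obtain ⟨hpwo1, hfin1⟩ := truncFam_summable F Gs (fun γ hγ => hγ)
  set famG : SummableFamily Γ R ℕ := ⟨fun k => trunc Gs (F k), hpwo1, hfin1⟩ with hfamG
  obtain ⟨tG, htG⟩ := hd_sum famG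
  set famW : SummableFamily Γ R ℕ := sf - tG with hfamW
  have hw : ∀ k, famW k = d (trunc Gsᶜ (F k)) := by
    intro k
    calc famW k = d (F k) - d (trunc Gs (F k)) := by
          rw [hfamW, SummableFamily.sub_apply, htG k, hdF k]
          rfl
      _ = d (F k - trunc Gs (F k)) := (d_sub d hd_add _ _).symm
      _ = d (trunc Gsᶜ (F k)) := by rw [sub_trunc]
  have h0T : ∀ (S : Set Γ) (k : ℕ), (trunc S (F k)).coeff 0 = 0 := by
    intro S k
    rw [trunc_coeff]
    split
    · exact h0F k
    · rfl
  have horder : ∀ k, trunc Gsᶜ (F k) ≠ 0 →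
      famW k ≠ 0 ∧ (famW k).order = psi d ((trunc Gsᶜ (F k)).order) := by
    intro k hk
    constructor
    · rw [hw k]; exact d_ne_zero d hd_ker hk (h0T _ k)
    · rw [hw k]; exact orderD d hd_add hd_smul hd_leib hd_ker hH hk (h0T _ k)
  have hVBk : ∀ x ∈ VB, ∃ k, (trunc Gsᶜ (F k)).coeff x ≠ 0 := by
    intro x hx
    obtain ⟨k, hk⟩ := Set.mem_iUnion.mp hx.1
    refine ⟨k, ?_⟩
    rw [trunc_coeff_mem (show x ∈ Gsᶜ from hx.2)]
    exact hk
  set M : Set Γ := {γ | ∃ k, trunc Gsᶜ (F k) ≠ 0 ∧ (trunc Gsᶜ (F k)).order = γ} with hM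
  have hMne : M.Nonempty := by
    obtain ⟨x, hx⟩ := hVBne
    obtain ⟨k, hk⟩ := hVBk x hx
    exact ⟨_, k, ne_zero_of_coeff_ne_zero hk, rfl⟩
  have hMB : ∀ γ ∈ M, γ ∈ VB ∧ γ ≠ 0 := by
    intro γ hγ
    obtain ⟨k, hk, hko⟩ := hγ
    have hsupp : γ ∈ (trunc Gsᶜ (F k)).support := by
      rw [← hko, HahnSeries.mem_support]
      exact coeff_order_ne_zero hk
    rw [support_trunc] at hsupp
    have hV : γ ∈ Vset F := Set.mem_iUnion.mpr ⟨k, hsupp.1⟩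
    refine ⟨⟨hV, hsupp.2⟩, ?_⟩
    intro h0
    have hs1 := hsupp.1
    rw [h0, HahnSeries.mem_support] at hs1
    exact hs1 (h0F k)
  have hMWF : M.IsWF := by
    rw [Set.isWF_iff_no_descending_seq]
    intro x hanti hmem
    replace hmem : ∀ n : ℕ, x n ∈ M := fun n => hmem n
    have hpsimem : ∀ n, psi d (x n) ∈ ⋃ k, (famW k).support := by
      intro n
      obtain ⟨k, hk, hko⟩ := hmem n
      obtain ⟨hne, ho⟩ := horder k hk
      refine Set.mem_iUnion.mpr ⟨k, ?_⟩
      rw [HahnSeries.mem_support, ← hko, ← ho]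
      exact coeff_order_ne_zero hne
    have hpsianti : StrictAnti (fun n => psi d (R := R) (x n)) := by
      intro a b hab
      exact psi_mono d hd_add hd_smul hd_leib hd_ker hH
        (hMB _ (hmem b)).2 (hMB _ (hmem a)).2 (hanti hab)
    exact Set.isWF_iff_no_descending_seq.mp
      (famW.isPWO_iUnion_support.isWF) _ hpsianti hpsimem
  set minf : Γ := hMWF.min hMne with hminf
  have hmVB : minf ∈ VB ∧ minf ≠ 0 := hMB _ (hMWF.min_mem hMne)
  have hlb : ∀ x ∈ VB, minf ≤ x := by
    intro x hx
    obtain ⟨k, hk⟩ := hVBk x hx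
    have hne : trunc Gsᶜ (F k) ≠ 0 := ne_zero_of_coeff_ne_zero hk
    have h1 : (trunc Gsᶜ (F k)).order ≤ x := order_le_of_coeff_ne_zero hk
    have h2 : (trunc Gsᶜ (F k)).order ∈ M := ⟨k, hne, rfl⟩
    exact le_trans (le_of_not_gt (hMWF.not_lt_min hMne h2)) h1
  have hgoodbelow : ∀ γ, γ < minf → goodPt F γ := by
    intro γ hγ
    by_contra hb
    obtain ⟨x, hxV, hxB, hxle⟩ := propagate F hb
    exact absurd (lt_of_le_of_lt hxle hγ) (not_lt.mpr (hlb x ⟨hxV, hxB⟩))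
  have hJinf : ¬ {k | (F k).coeff minf ≠ 0}.Finite := by
    have hbadm : ¬ goodPt F minf := hmVB.1.2
    rw [goodPt, not_and_or] at hbadm
    rcases hbadm with h1 | h2
    · exfalso
      rw [Set.isWF_iff_no_descending_seq] at h1
      push_neg at h1
      obtain ⟨x, hanti, hmem⟩ := h1
      replace hmem : ∀ n : ℕ, x n ∈ {y | y ∈ Vset F ∧ y ≤ minf} := fun n => hmem n
      have hx1B : ¬ goodPt F (x 1) :=
        descend_bad F (x := fun n => x (n + 1)) (fun a b hab => hanti (by omega))
          (fun n => (hmem (n + 1)).1)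
      have hge : minf ≤ x 1 := hlb _ ⟨(hmem 1).1, hx1B⟩
      have hlt : x 1 < minf :=
        lt_of_lt_of_le (hanti (by omega : (0:ℕ) < 1)) (hmem 0).2
      exact absurd hlt (not_lt.mpr hge)
    · push_neg at h2
      obtain ⟨γ', hle, hfin⟩ := h2
      obtain ⟨k, hk⟩ := Set.Infinite.nonempty hfin
      have hγ'B : γ' ∈ VB := by
        refine ⟨Set.mem_iUnion.mpr ⟨k, hk⟩, ?_⟩
        rw [goodPt, not_and_or]
        right
        push_neg
        exact ⟨γ', le_rfl, hfin⟩
      have heq : γ' = minf := le_antisymm hle (hlb _ hγ'B)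
      rwa [heq] at hfin
  obtain ⟨hpwo2, hfin2⟩ := truncFam_summable F (Set.Iio minf)
    (fun γ hγ => hgoodbelow γ hγ)
  set fam2 : SummableFamily Γ R ℕ :=
    ⟨fun k => trunc (Set.Iio minf) (F k), hpwo2, hfin2⟩ with hfam2
  obtain ⟨t2, ht2⟩ := hd_sum fam2
  set famW2 : SummableFamily Γ R ℕ := sf - t2 with hfamW2
  have hw2 : ∀ k, famW2 k = d (trunc (Set.Iio minf)ᶜ (F k)) := by
    intro k
    calc famW2 k = d (F k) - d (trunc (Set.Iio minf) (F k)) := by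
          rw [hfamW2, SummableFamily.sub_apply, ht2 k, hdF k]
          rfl
      _ = d (F k - trunc (Set.Iio minf) (F k)) := (d_sub d hd_add _ _).symm
      _ = d (trunc (Set.Iio minf)ᶜ (F k)) := by rw [sub_trunc]
  have hmemc : minf ∈ (Set.Iio minf)ᶜ := by simp
  have hkey2 : ∀ k, (F k).coeff minf ≠ 0 →
      (famW2 k).coeff (psi d (R := R) minf) ≠ 0 := by
    intro k hk
    have hTne : trunc (Set.Iio minf)ᶜ (F k) ≠ 0 :=
      ne_zero_of_coeff_ne_zero (g := minf) (by rw [trunc_coeff_mem hmemc]; exact hk)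
    have hord : (trunc (Set.Iio minf)ᶜ (F k)).order = minf := by
      apply order_eq_of_coeff
      · rw [trunc_coeff_mem hmemc]; exact hk
      · intro γ hγ
        exact trunc_coeff_not (by simpa using hγ)
    have hdne : famW2 k ≠ 0 := by
      rw [hw2 k]; exact d_ne_zero d hd_ker hTne (h0T _ k)
    have hwo : (famW2 k).order = psi d (R := R) minf := by
      rw [hw2 k, orderD d hd_add hd_smul hd_leib hd_ker hH hTne (h0T _ k), hord]
    rw [← hwo]
    exact coeff_order_ne_zero hdne
  exact hJinf (Set.Finite.subset (famW2.finite_co_support (psi d (R := R) minf))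
    (fun k hk => hkey2 k hk))

include hd_add hd_smul hd_leib hd_ker hH hd_sum in
theorem main_key' (F : ℕ → HahnSeries Γ R) (sf : SummableFamily Γ R ℕ)
    (hdF : ∀ k, d (F k) = sf k) (h0F : ∀ k, (F k).coeff 0 = 0) :
    (⋃ k, (F k).support).IsPWO ∧ ∀ γ : Γ, {k | (F k).coeff γ ≠ 0}.Finite := by
  have hgood := main_key d hd_add hd_smul hd_leib hd_ker hH hd_sum F sf hdF h0F
  constructor
  · rw [Set.isPWO_iff_isWF, Set.isWF_iff_no_descending_seq]
    intro x hanti hmem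
    replace hmem : ∀ n : ℕ, x n ∈ Vset F := fun n => hmem n
    exact descend_bad F hanti hmem (hgood (x 0))
  · intro γ
    exact (hgood γ).2 γ le_rfl

end MainKey2

end IntAux

open IntAux in
/-- in a field of well-based series `T = R[[Γ]]` with a
surjective, strongly linear H-field derivation `d` (kernel the constants,
positive on positive infinite elements), the antiderivative operator
`∫ : T → T` sending `f` to the unique `F` with `d F = f` and `0 ∉ supp F`
exists and is strongly linear. -/
theorem integration_strongly_linear [AddCommGroup Γ] [LinearOrder Γ] [IsOrderedAddMonoid Γ]
    [Field R] [LinearOrder R] [IsStrictOrderedRing R]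
    (d : HahnSeries Γ R → HahnSeries Γ R)
    (hd_strong : StronglyLinearMap d)
    (hd_leib : ∀ f g : HahnSeries Γ R, d (f * g) = d f * g + f * d g)
    (hd_surj : Function.Surjective d)
    (hd_ker : ∀ f : HahnSeries Γ R, d f = 0 ↔ ∃ r : R, f = HahnSeries.C r)
    (hH : ∀ f : HahnSeries Γ R,
      (∀ r : R, HahnLt (HahnSeries.C r) f) → HahnLt 0 (d f)) :
    ∃ I : HahnSeries Γ R → HahnSeries Γ R,
      (∀ f, d (I f) = f ∧ (I f).coeff 0 = 0) ∧ StronglyLinearMap I := by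
  classical
  obtain ⟨hd_add, hd_smul, hd_fam⟩ := hd_strong
  choose I0 hI0 using hd_surj
  set I : HahnSeries Γ R → HahnSeries Γ R :=
    fun f => I0 f - HahnSeries.C ((I0 f).coeff 0) with hIdef
  have hdC : ∀ r : R, d (HahnSeries.C r) = 0 := fun r => (hd_ker _).mpr ⟨r, rfl⟩
  have hdI : ∀ f, d (I f) = f := by
    intro f
    show d (I0 f - _) = f
    rw [d_sub d hd_add, hdC, sub_zero, hI0]
  have h0I : ∀ f, (I f).coeff 0 = 0 := by
    intro f
    show (I0 f - _).coeff 0 = 0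
    rw [coeff_sub, HahnSeries.C_apply, coeff_single_same, sub_self]
  have uniq : ∀ F G : HahnSeries Γ R, d F = d G → F.coeff 0 = 0 → G.coeff 0 = 0 →
      F = G := by
    intro F G hdFG h0F h0G
    have h1 : d (F - G) = 0 := by rw [d_sub d hd_add, hdFG, sub_self]
    obtain ⟨r, hr⟩ := (hd_ker _).mp h1
    have hr0 : r = 0 := by
      have h2 := congrArg (fun x : HahnSeries Γ R => x.coeff 0) hr
      simp only [coeff_sub, h0F, h0G, sub_self, HahnSeries.C_apply,
        coeff_single_same] at h2
      exact h2.symm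
    rw [hr0, map_zero, sub_eq_zero] at hr
    exact hr
  refine ⟨I, fun f => ⟨hdI f, h0I f⟩, ?_, ?_, ?_⟩
  · intro f g
    apply uniq
    · rw [hdI, hd_add, hdI, hdI]
    · exact h0I _
    · rw [coeff_add, h0I, h0I, add_zero]
  · intro r f
    apply uniq
    · rw [hdI, hd_smul, hdI]
    · exact h0I _
    · rw [HahnSeries.coeff_smul, h0I, smul_zero]
  · intro ι s
    have hd_sum : ∀ sf : SummableFamily Γ R ℕ,
        ∃ t : SummableFamily Γ R ℕ, ∀ i, t i = d (sf i) := by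
      intro sf
      obtain ⟨t, ht, _⟩ := hd_fam ℕ sf
      exact ⟨t, ht⟩
    have subfam : ∀ (e : ℕ → ι), Function.Injective e →
        ∃ sf : SummableFamily Γ R ℕ, ∀ n, sf n = s (e n) := by
      intro e he
      refine ⟨⟨fun n => s (e n), ?_, ?_⟩, fun n => rfl⟩
      · apply s.isPWO_iUnion_support.mono
        intro γ hγ
        obtain ⟨n, hn⟩ := Set.mem_iUnion.mp hγ
        exact Set.mem_iUnion.mpr ⟨e n, hn⟩
      · intro γ
        apply ((s.finite_co_support γ).preimage he.injOn).subset
        intro n hn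
        exact hn
    have key : ∀ (e : ℕ → ι), Function.Injective e →
        ∀ γ : Γ, goodPt (fun n => I (s (e n))) γ := by
      intro e he
      obtain ⟨sf, hsf⟩ := subfam e he
      exact main_key d hd_add hd_smul hd_leib hd_ker hH hd_sum
        (fun n => I (s (e n))) sf (fun k => by rw [hdI]; exact (hsf k).symm)
        (fun k => h0I _)
    have hpwo : (⋃ i, (I (s i)).support).IsPWO := by
      rw [Set.isPWO_iff_isWF, Set.isWF_iff_no_descending_seq]
      intro x hanti hmem
      replace hmem : ∀ n : ℕ, x n ∈ ⋃ i, (I (s i)).support := fun n => hmem n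
      have hch : ∀ n, ∃ i, x n ∈ (I (s i)).support := fun n => Set.mem_iUnion.mp (hmem n)
      choose idx hidx using hch
      by_cases hrep : ∃ i, {n | idx n = i}.Infinite
      · obtain ⟨i, hi⟩ := hrep
        have hanti2 : StrictAnti (fun m => x (Nat.nth (fun n => idx n = i) m)) :=
          fun a b hab => hanti ((Nat.nth_lt_nth hi).mpr hab)
        apply Set.isWF_iff_no_descending_seq.mp (I (s i)).isWF_support _ hanti2
        intro m
        have h3 := hidx (Nat.nth (fun n => idx n = i) m)
        rwa [Nat.nth_mem_of_infinite hi m] at h3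
      · push_neg at hrep
        have hp : {n | ∀ m, m < n → idx m ≠ idx n}.Infinite := by
          intro hfin
          have hrange : (Set.range idx).Finite := by
            apply (hfin.image idx).subset
            rintro _ ⟨n, rfl⟩
            have hex : ∃ m, idx m = idx n := ⟨n, rfl⟩
            refine ⟨Nat.find hex, ?_, Nat.find_spec hex⟩
            intro m hm hcon
            exact Nat.find_min hex hm (by rw [hcon, Nat.find_spec hex])
          apply Set.infinite_univ (α := ℕ)
          apply (hrange.biUnion (fun i _ => hrep i)).subset
          intro n _
          exact Set.mem_biUnion (Set.mem_range_self n) rfl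
        set pp : ℕ → Prop := fun n => ∀ m, m < n → idx m ≠ idx n with hpp
        set e : ℕ → ι := fun m => idx (Nat.nth pp m) with he'
        have he : Function.Injective e := by
          intro a b hab
          rcases lt_trichotomy a b with h | h | h
          · exact absurd hab (Nat.nth_mem_of_infinite hp b _ ((Nat.nth_lt_nth hp).mpr h))
          · exact h
          · exact absurd hab.symm
              (Nat.nth_mem_of_infinite hp a _ ((Nat.nth_lt_nth hp).mpr h))
        have hanti2 : StrictAnti (fun m => x (Nat.nth pp m)) :=
          fun a b hab => hanti ((Nat.nth_lt_nth hp).mpr hab)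
        have hmem2 : ∀ m, x (Nat.nth pp m) ∈ Vset (fun m => I (s (e m))) := by
          intro m
          exact Set.mem_iUnion.mpr ⟨m, hidx (Nat.nth pp m)⟩
        exact descend_bad (fun m => I (s (e m))) hanti2 hmem2 (key e he _)
    have hfin : ∀ γ : Γ, {i | (I (s i)).coeff γ ≠ 0}.Finite := by
      intro γ
      by_contra hinf
      set emb := Set.Infinite.natEmbedding _ hinf with hemb
      set e : ι → Prop := fun _ => True  -- dummy
      have hee : Function.Injective (fun n => ((emb n : {i | (I (s i)).coeff γ ≠ 0}) : ι)) :=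
        fun a b hab => emb.injective (Subtype.coe_injective hab)
      have hk := (key _ hee γ).2 γ le_rfl
      apply Set.infinite_univ (α := ℕ)
      apply hk.subset
      intro k _
      exact (emb k).2
    set t : SummableFamily Γ R ι := ⟨fun i => I (s i), hpwo, hfin⟩ with ht
    obtain ⟨u, hu1, hu2⟩ := hd_fam ι t
    have huv : u = s := by
      apply SummableFamily.ext
      intro i
      rw [hu1 i]
      exact hdI _
    have hsum0 : t.hsum.coeff 0 = 0 := by
      rw [SummableFamily.coeff_hsum]
      apply finsum_eq_zero_of_forall_eq_zero
      intro i
      exact h0I _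
    refine ⟨t, fun i => rfl, ?_⟩
    exact uniq _ _ (by rw [hdI, ← hu2, huv]) hsum0 (h0I _)
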